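/- Assume in addition that ξ ≠ 0 and H·ξ = 0. Then the kernel of A(ξ) has dimension exactly 6; explicitly, ker A(ξ) = { (ρ̇, u̇, Ḣ, ṗ) ∈ ℝ×ℝ³×ℝ³×ℝ : ξ·u̇ = 0 and ṗ = −H·Ḣ }. (This is the statement that the fiber of the kernel of the principal symbol at the intersection manifold Σ₂ = {τ = 0, ξ·H = 0} has dimension 6 = r₀ + 1 with r₀ = 5.) -/
import Mathlib


open Matrix

noncomputable section

/-- Euclidean dot product on `ℝ³`. -/
def dot3 (a b : Fin 3 → ℝ) : ℝ := a 0 * b 0 + a 1 * b 1 + a 2 * b 2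

/-- Cross product on `ℝ³`. -/
def cross3 (a b : Fin 3 → ℝ) : Fin 3 → ℝ :=
  ![a 1 * b 2 - a 2 * b 1, a 2 * b 0 - a 0 * b 2, a 0 * b 1 - a 1 * b 0]

/-- The matrix `A(ξ) = q(0,ξ)` of the principal symbol of the linearized ideal
MHD system in the coordinates `(ρ̇,u̇₁,u̇₂,u̇₃,Ḣ₁,Ḣ₂,Ḣ₃,ṗ)`, so that
`q(τ,ξ) = τ·Id₈ + A(ξ)`. -/
def Amat (ρ γ p : ℝ) (H ξ : Fin 3 → ℝ) : Matrix (Fin 8) (Fin 8) ℝ :=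
  !![0, ρ * ξ 0, ρ * ξ 1, ρ * ξ 2, 0, 0, 0, 0;
     0, 0, 0, 0, (ξ 0 * H 0 - dot3 H ξ) / ρ, (ξ 0 * H 1) / ρ, (ξ 0 * H 2) / ρ, ξ 0 / ρ;
     0, 0, 0, 0, (ξ 1 * H 0) / ρ, (ξ 1 * H 1 - dot3 H ξ) / ρ, (ξ 1 * H 2) / ρ, ξ 1 / ρ;
     0, 0, 0, 0, (ξ 2 * H 0) / ρ, (ξ 2 * H 1) / ρ, (ξ 2 * H 2 - dot3 H ξ) / ρ, ξ 2 / ρ;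
     0, H 0 * ξ 0 - dot3 H ξ, H 0 * ξ 1, H 0 * ξ 2, 0, 0, 0, 0;
     0, H 1 * ξ 0, H 1 * ξ 1 - dot3 H ξ, H 1 * ξ 2, 0, 0, 0, 0;
     0, H 2 * ξ 0, H 2 * ξ 1, H 2 * ξ 2 - dot3 H ξ, 0, 0, 0, 0;
     0, γ * p * ξ 0, γ * p * ξ 1, γ * p * ξ 2, 0, 0, 0, 0]

theorem cons8_5 {α : Type*} (a : α) (u : Fin 7 → α) : Matrix.vecCons a u 5 = u 4 := rfl
theorem cons8_6 {α : Type*} (a : α) (u : Fin 7 → α) : Matrix.vecCons a u 6 = u 5 := rfl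
theorem cons8_7 {α : Type*} (a : α) (u : Fin 7 → α) : Matrix.vecCons a u 7 = u 6 := rfl
theorem cons7_5 {α : Type*} (a : α) (u : Fin 6 → α) : Matrix.vecCons a u 5 = u 4 := rfl
theorem cons7_6 {α : Type*} (a : α) (u : Fin 6 → α) : Matrix.vecCons a u 6 = u 5 := rfl
theorem cons6_5 {α : Type*} (a : α) (u : Fin 5 → α) : Matrix.vecCons a u 5 = u 4 := rfl

/-- The reduced matrix whose kernel agrees with that of `Amat` on `Σ₂`. -/
def Bmat (H ξ : Fin 3 → ℝ) : Matrix (Fin 2) (Fin 8) ℝ :=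
  !![0, ξ 0, ξ 1, ξ 2, 0, 0, 0, 0;
     0, 0, 0, 0, H 0, H 1, H 2, 1]

/-- If `ξ ≠ 0` and `H·ξ = 0`, then
`ker A(ξ) = {(ρ̇,u̇,Ḣ,ṗ) : ξ·u̇ = 0 ∧ ṗ = −H·Ḣ}` and this kernel has dimension
exactly `6`. -/
theorem stmt14 (ρ γ p : ℝ) (H ξ : Fin 3 → ℝ)
    (hρ : 0 < ρ) (hγp : 0 < γ * p)
    (hξ : ξ ≠ 0) (hHξ : dot3 H ξ = 0) :
    (∀ v : Fin 8 → ℝ,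
      Amat ρ γ p H ξ *ᵥ v = 0 ↔
        (ξ 0 * v 1 + ξ 1 * v 2 + ξ 2 * v 3 = 0 ∧
         v 7 = -(H 0 * v 4 + H 1 * v 5 + H 2 * v 6))) ∧
    Module.finrank ℝ (LinearMap.ker (Amat ρ γ p H ξ).mulVecLin) = 6 := by
  have hρ0 : ρ ≠ 0 := hρ.ne'
  have h3 : ξ 0 ≠ 0 ∨ ξ 1 ≠ 0 ∨ ξ 2 ≠ 0 := by
    by_contra hcon
    push_neg at hcon
    apply hξ
    funext j
    fin_cases j <;> simp [hcon.1, hcon.2.1, hcon.2.2]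
  have hsq : 0 < ξ 0 ^ 2 + ξ 1 ^ 2 + ξ 2 ^ 2 := by
    rcases h3 with h | h | h <;>
      · have h2 : 0 < ξ _ ^ 2 := lt_of_le_of_ne (sq_nonneg _) (Ne.symm (pow_ne_zero 2 h))
        nlinarith [sq_nonneg (ξ 0), sq_nonneg (ξ 1), sq_nonneg (ξ 2)]
  have key : ∀ v : Fin 8 → ℝ,
      Amat ρ γ p H ξ *ᵥ v = 0 ↔
        (ξ 0 * v 1 + ξ 1 * v 2 + ξ 2 * v 3 = 0 ∧
         v 7 = -(H 0 * v 4 + H 1 * v 5 + H 2 * v 6)) := by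
    intro v
    constructor
    · intro h
      have h0 := congrFun h 0
      have h1 := congrFun h 1
      have h2 := congrFun h 2
      have h3 := congrFun h 3
      simp [Amat, Matrix.mulVec, dotProduct, Fin.sum_univ_eight, cons8_5, cons8_6, cons8_7, cons7_5, cons7_6, cons6_5,
        hHξ] at h0 h1 h2 h3
      have hS : ξ 0 * v 1 + ξ 1 * v 2 + ξ 2 * v 3 = 0 := by
        have hρS : ρ * (ξ 0 * v 1 + ξ 1 * v 2 + ξ 2 * v 3) = 0 := by linear_combination h0
        rcases mul_eq_zero.mp hρS with h' | h'
        · exact absurd h' hρ0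
        · exact h'
      have hT : (ξ 0 ^ 2 + ξ 1 ^ 2 + ξ 2 ^ 2) / ρ *
          (H 0 * v 4 + H 1 * v 5 + H 2 * v 6 + v 7) = 0 := by
        linear_combination ξ 0 * h1 + ξ 1 * h2 + ξ 2 * h3
      have hT0 : H 0 * v 4 + H 1 * v 5 + H 2 * v 6 + v 7 = 0 := by
        rcases mul_eq_zero.mp hT with h' | h'
        · exact absurd h' (div_ne_zero hsq.ne' hρ0)
        · exact h'
      exact ⟨hS, by linarith⟩
    · rintro ⟨h1, h2⟩
      funext i
      fin_cases i
      · show (Amat ρ γ p H ξ *ᵥ v) 0 = 0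
        simp [Amat, Matrix.mulVec, dotProduct, Fin.sum_univ_eight, cons8_5, cons8_6, cons8_7, cons7_5, cons7_6, cons6_5, hHξ]
        linear_combination ρ * h1
      · show (Amat ρ γ p H ξ *ᵥ v) 1 = 0
        simp [Amat, Matrix.mulVec, dotProduct, Fin.sum_univ_eight, cons8_5, cons8_6, cons8_7, cons7_5, cons7_6, cons6_5, hHξ]
        linear_combination (ξ 0 / ρ) * h2
      · show (Amat ρ γ p H ξ *ᵥ v) 2 = 0
        simp [Amat, Matrix.mulVec, dotProduct, Fin.sum_univ_eight, cons8_5, cons8_6, cons8_7, cons7_5, cons7_6, cons6_5, hHξ]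
        linear_combination (ξ 1 / ρ) * h2
      · show (Amat ρ γ p H ξ *ᵥ v) 3 = 0
        simp [Amat, Matrix.mulVec, dotProduct, Fin.sum_univ_eight, cons8_5, cons8_6, cons8_7, cons7_5, cons7_6, cons6_5, hHξ]
        linear_combination (ξ 2 / ρ) * h2
      · show (Amat ρ γ p H ξ *ᵥ v) 4 = 0
        simp [Amat, Matrix.mulVec, dotProduct, Fin.sum_univ_eight, cons8_5, cons8_6, cons8_7, cons7_5, cons7_6, cons6_5, hHξ]
        linear_combination H 0 * h1
      · show (Amat ρ γ p H ξ *ᵥ v) 5 = 0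
        simp [Amat, Matrix.mulVec, dotProduct, Fin.sum_univ_eight, cons8_5, cons8_6, cons8_7, cons7_5, cons7_6, cons6_5, hHξ]
        linear_combination H 1 * h1
      · show (Amat ρ γ p H ξ *ᵥ v) 6 = 0
        simp [Amat, Matrix.mulVec, dotProduct, Fin.sum_univ_eight, cons8_5, cons8_6, cons8_7, cons7_5, cons7_6, cons6_5, hHξ]
        linear_combination H 2 * h1
      · show (Amat ρ γ p H ξ *ᵥ v) 7 = 0
        simp [Amat, Matrix.mulVec, dotProduct, Fin.sum_univ_eight, cons8_5, cons8_6, cons8_7, cons7_5, cons7_6, cons6_5, hHξ]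
        linear_combination γ * p * h1
  refine ⟨key, ?_⟩
  have hker : LinearMap.ker (Amat ρ γ p H ξ).mulVecLin
      = LinearMap.ker (Bmat H ξ).mulVecLin := by
    ext v
    simp only [LinearMap.mem_ker, Matrix.mulVecLin_apply]
    rw [key v]
    constructor
    · rintro ⟨h1, h2⟩
      funext j
      fin_cases j
      · show (Bmat H ξ *ᵥ v) 0 = 0
        simp [Bmat, Matrix.mulVec, dotProduct, Fin.sum_univ_eight, cons8_5, cons8_6, cons8_7, cons7_5, cons7_6, cons6_5]
        linear_combination h1
      · show (Bmat H ξ *ᵥ v) 1 = 0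
        simp [Bmat, Matrix.mulVec, dotProduct, Fin.sum_univ_eight, cons8_5, cons8_6, cons8_7, cons7_5, cons7_6, cons6_5]
        linear_combination h2
    · intro h
      have h0 := congrFun h 0
      have h1 := congrFun h 1
      simp [Bmat, Matrix.mulVec, dotProduct, Fin.sum_univ_eight, cons8_5, cons8_6, cons8_7, cons7_5, cons7_6, cons6_5]
        at h0 h1
      exact ⟨by linear_combination h0, by linear_combination h1⟩
  rw [hker]
  have hsurj : Function.Surjective (Bmat H ξ).mulVecLin := by
    intro w
    rcases h3 with hne | hne | hne
    · refine ⟨![0, w 0 / ξ 0, 0, 0, 0, 0, 0, w 1], ?_⟩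
      funext j
      fin_cases j
      · show (Bmat H ξ *ᵥ ![0, w 0 / ξ 0, 0, 0, 0, 0, 0, w 1]) 0 = w 0
        simp [Bmat, Matrix.mulVec, dotProduct, Fin.sum_univ_eight, cons8_5, cons8_6, cons8_7, cons7_5, cons7_6, cons6_5]
        field_simp [hne]
      · show (Bmat H ξ *ᵥ ![0, w 0 / ξ 0, 0, 0, 0, 0, 0, w 1]) 1 = w 1
        simp [Bmat, Matrix.mulVec, dotProduct, Fin.sum_univ_eight, cons8_5, cons8_6, cons8_7, cons7_5, cons7_6, cons6_5]
    · refine ⟨![0, 0, w 0 / ξ 1, 0, 0, 0, 0, w 1], ?_⟩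
      funext j
      fin_cases j
      · show (Bmat H ξ *ᵥ ![0, 0, w 0 / ξ 1, 0, 0, 0, 0, w 1]) 0 = w 0
        simp [Bmat, Matrix.mulVec, dotProduct, Fin.sum_univ_eight, cons8_5, cons8_6, cons8_7, cons7_5, cons7_6, cons6_5]
        field_simp [hne]
      · show (Bmat H ξ *ᵥ ![0, 0, w 0 / ξ 1, 0, 0, 0, 0, w 1]) 1 = w 1
        simp [Bmat, Matrix.mulVec, dotProduct, Fin.sum_univ_eight, cons8_5, cons8_6, cons8_7, cons7_5, cons7_6, cons6_5]
    · refine ⟨![0, 0, 0, w 0 / ξ 2, 0, 0, 0, w 1], ?_⟩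
      funext j
      fin_cases j
      · show (Bmat H ξ *ᵥ ![0, 0, 0, w 0 / ξ 2, 0, 0, 0, w 1]) 0 = w 0
        simp [Bmat, Matrix.mulVec, dotProduct, Fin.sum_univ_eight, cons8_5, cons8_6, cons8_7, cons7_5, cons7_6, cons6_5]
        field_simp [hne]
      · show (Bmat H ξ *ᵥ ![0, 0, 0, w 0 / ξ 2, 0, 0, 0, w 1]) 1 = w 1
        simp [Bmat, Matrix.mulVec, dotProduct, Fin.sum_univ_eight, cons8_5, cons8_6, cons8_7, cons7_5, cons7_6, cons6_5]
  have hrange : LinearMap.range (Bmat H ξ).mulVecLin = ⊤ :=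
    LinearMap.range_eq_top.mpr hsurj
  have hrk := LinearMap.finrank_range_add_finrank_ker (Bmat H ξ).mulVecLin
  rw [hrange, finrank_top] at hrk
  simp only [Module.finrank_fin_fun] at hrk
  omega
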